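/- Let c > 1/2, C* > 0, and t* ≥ 1. There exists a time-independent constant K > 0 such that for all t ≥ t*, the quantity I₂(t) := t^{−4c} · ∫_{u=t*}^{t} ∫_{s=u}^{t} ∫_{w=s}^{t} ∫_{r=w}^{t} (r^{2c−2} · s^{2c−2} / w) · e^{−2C* r + 2C* u − C* s + C* w} dr dw ds du satisfies: I₂(t) ≤ K/t⁴ if c > 1; I₂(t) ≤ K(1 + log t)/t⁴ if c = 1; and I₂(t) ≤ K/t^{4c} if 1/2 < c < 1. -/

import Mathlib

open MeasureTheory Set

lemma uIcc_subset_Ioi' {a b : ℝ} (ha : 0 < a) (hb : 0 < b) :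
    Set.uIcc a b ⊆ Set.Ioi 0 := fun _ hx => lt_of_lt_of_le (lt_min ha hb) hx.1

lemma intInt {f : ℝ → ℝ} (hf : ContinuousOn f (Set.Ioi 0)) {a b : ℝ}
    (ha : 0 < a) (hb : 0 < b) : IntervalIntegrable f volume a b :=
  (hf.mono (uIcc_subset_Ioi' ha hb)).intervalIntegrable

lemma hasDerivAt_prim {f : ℝ → ℝ} (hf : ContinuousOn f (Set.Ioi 0)) {t x : ℝ}
    (ht : 0 < t) (hx : 0 < x) :
    HasDerivAt (fun y => ∫ s in y..t, f s) (-f x) x :=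
  intervalIntegral.integral_hasDerivAt_left (intInt hf hx ht)
    (hf.stronglyMeasurableAtFilter isOpen_Ioi x hx)
    (hf.continuousAt (Ioi_mem_nhds hx))

lemma contOn_prim {f : ℝ → ℝ} (hf : ContinuousOn f (Set.Ioi 0)) {t : ℝ} (ht : 0 < t) :
    ContinuousOn (fun y => ∫ s in y..t, f s) (Set.Ioi 0) := fun _ hx =>
  ((hasDerivAt_prim hf ht hx).continuousAt).continuousWithinAt

lemma hasDerivAt_exp_mul (k x : ℝ) (hk : k ≠ 0) :
    HasDerivAt (fun y => Real.exp (k * y) / k) (Real.exp (k * x)) x := by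
  have h1 : HasDerivAt (fun y : ℝ => k * y) k x := by
    simpa using (hasDerivAt_id x).const_mul k
  have h2 := ((Real.hasDerivAt_exp (k * x)).comp x h1).div_const k
  exact h2.congr_deriv (by field_simp)

lemma cont_exp_mul (k : ℝ) : Continuous fun x : ℝ => Real.exp (k * x) :=
  Real.continuous_exp.comp (continuous_const.mul continuous_id)

lemma integral_exp_mul (k : ℝ) (hk : k ≠ 0) (a b : ℝ) :
    ∫ x in a..b, Real.exp (k * x) = (Real.exp (k * b) - Real.exp (k * a)) / k := by
  rw [intervalIntegral.integral_eq_sub_of_hasDerivAt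
      (fun x _ => hasDerivAt_exp_mul k x hk) ((cont_exp_mul k).intervalIntegrable a b)]
  ring

lemma integral_exp_neg_le (k : ℝ) (hk : 0 < k) {a b : ℝ} :
    ∫ x in a..b, Real.exp ((-k) * x) ≤ Real.exp ((-k) * a) / k := by
  have h1 := Real.exp_pos ((-k) * b)
  rw [integral_exp_mul (-k) (by linarith) a b, div_neg, ← neg_div, neg_sub]
  gcongr
  linarith



/-- The quantity `I₂(t)` from Lemma 5.4: a fourfold iterated integral over the
ordered region `t* ≤ u ≤ s ≤ w ≤ r ≤ t`, scaled by `t^{-4c}`. -/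
noncomputable def I2 (c Cstar tstar t : ℝ) : ℝ :=
  t ^ (-(4 * c)) *
    ∫ u in tstar..t, ∫ s in u..t, ∫ w in s..t, ∫ r in w..t,
      (r ^ (2 * c - 2) * s ^ (2 * c - 2) / w) *
        Real.exp (-2 * Cstar * r + 2 * Cstar * u - Cstar * s + Cstar * w)

noncomputable def FF1 (c C t w : ℝ) : ℝ :=
  ∫ r in w..t, r ^ (2*c-2) * Real.exp ((-(2*C)) * r)

noncomputable def FF2 (c C t s : ℝ) : ℝ :=
  ∫ w in s..t, (Real.exp (C*w) / w) * FF1 c C t w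

noncomputable def GG (c C t u : ℝ) : ℝ :=
  ∫ s in u..t, (s ^ (2*c-2) * Real.exp ((-C) * s)) * FF2 c C t s

noncomputable def Gh (c C t u : ℝ) : ℝ :=
  ∫ s in u..t, s ^ (2*c-3) * Real.exp ((-(2*C)) * s)

lemma contOn_rpow (p : ℝ) : ContinuousOn (fun x : ℝ => x ^ p) (Set.Ioi 0) :=
  fun x hx => (Real.continuousAt_rpow_const x p (Or.inl (ne_of_gt hx))).continuousWithinAt

lemma main_est (c C a t : ℝ) (hC : 0 < C) (ha : 1 ≤ a) (hat : a ≤ t) :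
    I2 c C a t ≤
      t ^ (-(4*c)) *
        ((max 1 (t ^ (2*c-2)) / (4*C^3)) * ∫ u in a..t, u ^ (2*c-3)) := by
  have ha0 : (0:ℝ) < a := by linarith
  have ht0 : (0:ℝ) < t := by linarith
  have ht1 : (1:ℝ) ≤ t := le_trans ha hat
  set M := max 1 (t ^ (2*c-2)) with hMdef
  have hM0 : (0:ℝ) < M := lt_of_lt_of_le one_pos (le_max_left _ _)
  -- continuity facts
  have contA : ContinuousOn (fun r : ℝ => r ^ (2*c-2) * Real.exp ((-(2*C)) * r))
      (Set.Ioi 0) := (contOn_rpow _).mul (cont_exp_mul _).continuousOn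
  have contF1 : ContinuousOn (FF1 c C t) (Set.Ioi 0) := contOn_prim contA ht0
  have contCw : ContinuousOn (fun w : ℝ => Real.exp (C*w) / w) (Set.Ioi 0) :=
    (cont_exp_mul C).continuousOn.div continuousOn_id fun x hx => ne_of_gt hx
  have contH : ContinuousOn (fun w => (Real.exp (C*w) / w) * FF1 c C t w)
      (Set.Ioi 0) := contCw.mul contF1
  have contF2 : ContinuousOn (FF2 c C t) (Set.Ioi 0) := contOn_prim contH ht0
  have contB : ContinuousOn (fun s : ℝ => s ^ (2*c-2) * Real.exp ((-C) * s))
      (Set.Ioi 0) := (contOn_rpow _).mul (cont_exp_mul _).continuousOn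
  have contBF2 : ContinuousOn (fun s => (s ^ (2*c-2) * Real.exp ((-C) * s)) * FF2 c C t s)
      (Set.Ioi 0) := contB.mul contF2
  have contG : ContinuousOn (GG c C t) (Set.Ioi 0) := contOn_prim contBF2 ht0
  have contg : ContinuousOn (fun s : ℝ => s ^ (2*c-3) * Real.exp ((-(2*C)) * s))
      (Set.Ioi 0) := (contOn_rpow _).mul (cont_exp_mul _).continuousOn
  have contGh : ContinuousOn (Gh c C t) (Set.Ioi 0) := contOn_prim contg ht0
  -- pointwise rpow bound
  have hrM : ∀ r : ℝ, 1 ≤ r → r ≤ t → r ^ (2*c-2) ≤ M := by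
    intro r h1 h2
    rcases le_or_gt (2*c-2) 0 with h | h
    · exact le_max_of_le_left (Real.rpow_le_one_of_one_le_of_nonpos h1 h)
    · exact le_max_of_le_right (Real.rpow_le_rpow (by linarith) h2 h.le)
  -- F1 bounds
  have hF1nn : ∀ w, a ≤ w → w ≤ t → 0 ≤ FF1 c C t w := by
    intro w h1 h2
    exact intervalIntegral.integral_nonneg h2 fun r hr =>
      mul_nonneg (Real.rpow_nonneg (by linarith [hr.1]) _) (Real.exp_pos _).le
  have hF1bd : ∀ w, a ≤ w → w ≤ t → FF1 c C t w ≤ M * (Real.exp ((-(2*C)) * w) / (2*C)) := by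
    intro w h1 h2
    have hw0 : (0:ℝ) < w := by linarith
    calc FF1 c C t w ≤ ∫ r in w..t, M * Real.exp ((-(2*C)) * r) := by
          apply intervalIntegral.integral_mono_on h2 (intInt contA hw0 ht0)
            ((continuous_const.mul (cont_exp_mul _)).intervalIntegrable _ _)
          intro r hr
          exact mul_le_mul_of_nonneg_right (hrM r (by linarith [hr.1]) hr.2) (Real.exp_pos _).le
      _ = M * ∫ r in w..t, Real.exp ((-(2*C)) * r) := intervalIntegral.integral_const_mul _ _
      _ ≤ M * (Real.exp ((-(2*C)) * w) / (2*C)) :=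
          mul_le_mul_of_nonneg_left (integral_exp_neg_le (2*C) (by linarith)) hM0.le
  -- F2 bounds
  have hF2nn : ∀ s, a ≤ s → s ≤ t → 0 ≤ FF2 c C t s := by
    intro s h1 h2
    apply intervalIntegral.integral_nonneg h2
    intro w hw
    have hw0 : (0:ℝ) < w := by linarith [hw.1]
    exact mul_nonneg (by positivity) (hF1nn w (le_trans h1 hw.1) hw.2)
  have hF2bd : ∀ s, a ≤ s → s ≤ t →
      FF2 c C t s ≤ M * Real.exp ((-C) * s) / (2*C^2*s) := by
    intro s h1 h2
    have hs0 : (0:ℝ) < s := by linarith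
    calc FF2 c C t s ≤ ∫ w in s..t, (M/(2*C*s)) * Real.exp ((-C) * w) := by
          apply intervalIntegral.integral_mono_on h2 (intInt contH hs0 ht0)
            ((continuous_const.mul (cont_exp_mul _)).intervalIntegrable _ _)
          intro w hw
          have hw0 : (0:ℝ) < w := lt_of_lt_of_le hs0 hw.1
          have hexp : Real.exp (C*w) * Real.exp ((-(2*C)) * w) = Real.exp ((-C) * w) := by
            rw [← Real.exp_add]; congr 1; ring
          calc (Real.exp (C*w)/w) * FF1 c C t w
              ≤ (Real.exp (C*w)/w) * (M * (Real.exp ((-(2*C)) * w) / (2*C))) :=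
                mul_le_mul_of_nonneg_left (hF1bd w (le_trans h1 hw.1) hw.2) (by positivity)
            _ = (M/(2*C*w)) * (Real.exp (C*w) * Real.exp ((-(2*C)) * w)) := by
                field_simp
            _ = (M/(2*C*w)) * Real.exp ((-C) * w) := by rw [hexp]
            _ ≤ (M/(2*C*s)) * Real.exp ((-C) * w) := by
                apply mul_le_mul_of_nonneg_right _ (Real.exp_pos _).le
                gcongr
                exact hw.1
      _ = (M/(2*C*s)) * ∫ w in s..t, Real.exp ((-C) * w) :=
          intervalIntegral.integral_const_mul _ _
      _ ≤ (M/(2*C*s)) * (Real.exp ((-C) * s) / C) :=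
          mul_le_mul_of_nonneg_left (integral_exp_neg_le C hC) (by positivity)
      _ = M * Real.exp ((-C) * s) / (2*C^2*s) := by field_simp
  -- G bound
  have hGbd : ∀ u, a ≤ u → u ≤ t → GG c C t u ≤ (M/(2*C^2)) * Gh c C t u := by
    intro u h1 h2
    have hu0 : (0:ℝ) < u := by linarith
    calc GG c C t u
        ≤ ∫ s in u..t, (M/(2*C^2)) * (s ^ (2*c-3) * Real.exp ((-(2*C)) * s)) := by
          apply intervalIntegral.integral_mono_on h2 (intInt contBF2 hu0 ht0)
            (intInt (continuousOn_const.mul contg) hu0 ht0)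
          intro s hs
          have hs0 : (0:ℝ) < s := lt_of_lt_of_le hu0 hs.1
          have e1 : s ^ (2*c-3) = s ^ (2*c-2) / s := by
            rw [show 2*c-3 = 2*c-2-1 by ring, Real.rpow_sub_one (ne_of_gt hs0)]
          have e2 : Real.exp ((-C) * s) * Real.exp ((-C) * s) = Real.exp ((-(2*C)) * s) := by
            rw [← Real.exp_add]; congr 1; ring
          calc (s ^ (2*c-2) * Real.exp ((-C) * s)) * FF2 c C t s
              ≤ (s ^ (2*c-2) * Real.exp ((-C) * s)) * (M * Real.exp ((-C) * s) / (2*C^2*s)) := by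
                apply mul_le_mul_of_nonneg_left (hF2bd s (le_trans h1 hs.1) hs.2)
                exact mul_nonneg (Real.rpow_nonneg hs0.le _) (Real.exp_pos _).le
            _ = (M/(2*C^2)) * ((s ^ (2*c-2) / s) * (Real.exp ((-C) * s) * Real.exp ((-C) * s))) := by
                field_simp
            _ = (M/(2*C^2)) * (s ^ (2*c-3) * Real.exp ((-(2*C)) * s)) := by rw [e1, e2]
      _ = (M/(2*C^2)) * Gh c C t u := intervalIntegral.integral_const_mul _ _
  -- integration by parts estimate
  have hGha : 0 ≤ Gh c C t a :=
    intervalIntegral.integral_nonneg hat fun s hs =>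
      mul_nonneg (Real.rpow_nonneg (by linarith [hs.1]) _) (Real.exp_pos _).le
  have hparts : ∫ u in a..t, Real.exp ((2*C) * u) * Gh c C t u
      ≤ (1/(2*C)) * ∫ u in a..t, u ^ (2*c-3) := by
    have huIcc : Set.uIcc a t = Set.Icc a t := uIcc_of_le hat
    have hderivGh : ∀ x ∈ Set.uIcc a t,
        HasDerivAt (Gh c C t) (-(x ^ (2*c-3) * Real.exp ((-(2*C)) * x))) x := by
      intro x hx
      rw [huIcc] at hx
      exact hasDerivAt_prim contg ht0 (by linarith [hx.1])
    have hderivV : ∀ x ∈ Set.uIcc a t,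
        HasDerivAt (fun y => Real.exp ((2*C) * y) / (2*C)) (Real.exp ((2*C) * x)) x :=
      fun x _ => hasDerivAt_exp_mul (2*C) x (by linarith)
    have hint_g : IntervalIntegrable (fun x => -(x ^ (2*c-3) * Real.exp ((-(2*C)) * x)))
        volume a t := (intInt contg ha0 ht0).neg
    have hint_v : IntervalIntegrable (fun x => Real.exp ((2*C) * x)) volume a t :=
      (cont_exp_mul _).intervalIntegrable a t
    have hIBP := intervalIntegral.integral_mul_deriv_eq_deriv_mul hderivGh hderivV hint_g hint_v
    have hGht : Gh c C t t = 0 := intervalIntegral.integral_same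
    have hlast : ∫ x in a..t,
        (-(x ^ (2*c-3) * Real.exp ((-(2*C)) * x))) * (Real.exp ((2*C) * x) / (2*C))
        = -((1/(2*C)) * ∫ x in a..t, x ^ (2*c-3)) := by
      rw [← intervalIntegral.integral_const_mul, ← intervalIntegral.integral_neg]
      apply intervalIntegral.integral_congr
      intro x _
      have harg : Real.exp ((-(2*C)) * x) * Real.exp ((2*C) * x) = 1 := by
        rw [← Real.exp_add, show (-(2*C)) * x + (2*C) * x = 0 by ring, Real.exp_zero]
      calc (-(x ^ (2*c-3) * Real.exp ((-(2*C)) * x))) * (Real.exp ((2*C) * x) / (2*C))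
          = -((1/(2*C)) * (x ^ (2*c-3) * (Real.exp ((-(2*C)) * x) * Real.exp ((2*C) * x)))) := by
            ring
        _ = -((1/(2*C)) * x ^ (2*c-3)) := by rw [harg, mul_one]
    have hcomm : ∫ u in a..t, Real.exp ((2*C) * u) * Gh c C t u
        = ∫ x in a..t, Gh c C t x * Real.exp ((2*C) * x) := by
      apply intervalIntegral.integral_congr
      intro x _
      ring
    rw [hcomm, hIBP, hGht, hlast]
    have h1 : 0 ≤ Gh c C t a * (Real.exp ((2*C) * a) / (2*C)) :=
      mul_nonneg hGha (by positivity)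
    simp only [zero_mul, zero_sub, sub_neg_eq_add]
    linarith
  -- bound on the u-integral
  have hQbd : (∫ u in a..t, Real.exp ((2*C) * u) * GG c C t u)
      ≤ (M/(4*C^3)) * ∫ u in a..t, u ^ (2*c-3) := by
    have contD : ContinuousOn (fun u : ℝ => Real.exp ((2*C) * u)) (Set.Ioi 0) :=
      (cont_exp_mul _).continuousOn
    calc ∫ u in a..t, Real.exp ((2*C) * u) * GG c C t u
        ≤ ∫ u in a..t, (M/(2*C^2)) * (Real.exp ((2*C) * u) * Gh c C t u) := by
          apply intervalIntegral.integral_mono_on hat (intInt (contD.mul contG) ha0 ht0)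
            (intInt (continuousOn_const.mul (contD.mul contGh)) ha0 ht0)
          intro u hu
          calc Real.exp ((2*C) * u) * GG c C t u
              ≤ Real.exp ((2*C) * u) * ((M/(2*C^2)) * Gh c C t u) :=
                mul_le_mul_of_nonneg_left (hGbd u hu.1 hu.2) (Real.exp_pos _).le
            _ = (M/(2*C^2)) * (Real.exp ((2*C) * u) * Gh c C t u) := by ring
      _ = (M/(2*C^2)) * ∫ u in a..t, Real.exp ((2*C) * u) * Gh c C t u :=
          intervalIntegral.integral_const_mul _ _
      _ ≤ (M/(2*C^2)) * ((1/(2*C)) * ∫ u in a..t, u ^ (2*c-3)) :=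
          mul_le_mul_of_nonneg_left hparts (by positivity)
      _ = (M/(4*C^3)) * ∫ u in a..t, u ^ (2*c-3) := by
          rw [← mul_assoc]
          congr 1
          field_simp
          norm_num
  -- rewriting I2
  have hr_step : ∀ u s w : ℝ,
      (∫ r in w..t, (r ^ (2*c-2) * s ^ (2*c-2) / w) *
          Real.exp (-2*C*r + 2*C*u - C*s + C*w))
      = (Real.exp ((2*C) * u) * ((s ^ (2*c-2) * Real.exp ((-C) * s)) * (Real.exp (C*w) / w)))
          * FF1 c C t w := by
    intro u s w
    rw [FF1, ← intervalIntegral.integral_const_mul]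
    apply intervalIntegral.integral_congr
    intro r _
    dsimp only
    have e : Real.exp (-2*C*r + 2*C*u - C*s + C*w)
        = Real.exp ((2*C) * u) * Real.exp ((-C) * s) * Real.exp (C*w)
            * Real.exp ((-(2*C)) * r) := by
      rw [← Real.exp_add, ← Real.exp_add, ← Real.exp_add]; congr 1; ring
    rw [e]; ring
  have hw_step : ∀ u s : ℝ,
      (∫ w in s..t, ∫ r in w..t, (r ^ (2*c-2) * s ^ (2*c-2) / w) *
          Real.exp (-2*C*r + 2*C*u - C*s + C*w))
      = (Real.exp ((2*C) * u) * (s ^ (2*c-2) * Real.exp ((-C) * s))) * FF2 c C t s := by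
    intro u s
    rw [FF2, ← intervalIntegral.integral_const_mul]
    apply intervalIntegral.integral_congr
    intro w _
    dsimp only
    rw [hr_step u s w]; ring
  have hs_step : ∀ u : ℝ,
      (∫ s in u..t, ∫ w in s..t, ∫ r in w..t, (r ^ (2*c-2) * s ^ (2*c-2) / w) *
          Real.exp (-2*C*r + 2*C*u - C*s + C*w))
      = Real.exp ((2*C) * u) * GG c C t u := by
    intro u
    rw [GG, ← intervalIntegral.integral_const_mul]
    apply intervalIntegral.integral_congr
    intro s _
    dsimp only
    rw [hw_step u s]; ring
  have hI2 : I2 c C a t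
      = t ^ (-(4*c)) * ∫ u in a..t, Real.exp ((2*C) * u) * GG c C t u := by
    rw [I2]
    congr 1
    exact intervalIntegral.integral_congr fun u _ => hs_step u
  rw [hI2]
  exact mul_le_mul_of_nonneg_left hQbd (Real.rpow_nonneg ht0.le _)

/-- Lemma 5.4 of the paper. -/
theorem stmt_2 (c Cstar tstar : ℝ) (hc : 1 / 2 < c) (hC : 0 < Cstar)
    (htstar : 1 ≤ tstar) :
    ∃ K : ℝ, 0 < K ∧ ∀ t : ℝ, tstar ≤ t →
      (1 < c → I2 c Cstar tstar t ≤ K / t ^ 4) ∧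
      (c = 1 → I2 c Cstar tstar t ≤ K * (1 + Real.log t) / t ^ 4) ∧
      (c < 1 → I2 c Cstar tstar t ≤ K / t ^ (4 * c)) := by
  refine ⟨(1 + |2*c - 2|⁻¹) / (4*Cstar^3), by positivity, ?_⟩
  intro t ht
  have ht1 : (1:ℝ) ≤ t := le_trans htstar ht
  have ht0 : (0:ℝ) < t := by linarith
  have hts0 : (0:ℝ) < tstar := by linarith
  have hmain := main_est c Cstar tstar t hC htstar ht
  have htnat : t ^ (4:ℝ) = t ^ (4:ℕ) := by
    rw [← Real.rpow_natCast t 4]; norm_num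
  have ht4 : t ^ (-4:ℝ) = 1/t^4 := by
    rw [Real.rpow_neg ht0.le, htnat, one_div]
  refine ⟨?_, ?_, ?_⟩
  · -- case c > 1
    intro h1c
    have h2 : (0:ℝ) < 2*c-2 := by linarith
    have hM : max 1 (t ^ (2*c-2)) = t ^ (2*c-2) :=
      max_eq_right (Real.one_le_rpow ht1 h2.le)
    have hJ : (∫ u in tstar..t, u ^ (2*c-3))
        = (t ^ (2*c-2) - tstar ^ (2*c-2)) / (2*c-2) := by
      rw [integral_rpow (Or.inl (by linarith : (-1:ℝ) < 2*c-3)),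
        show (2*c-3+1:ℝ) = 2*c-2 by ring]
    have hJbd : (∫ u in tstar..t, u ^ (2*c-3)) ≤ t ^ (2*c-2) / (2*c-2) := by
      rw [hJ]
      have h3 : (0:ℝ) ≤ tstar ^ (2*c-2) := Real.rpow_nonneg hts0.le _
      gcongr
      linarith
    have hK1 : 1/((2*c-2)*(4*Cstar^3)) ≤ (1 + |2*c - 2|⁻¹)/(4*Cstar^3) := by
      rw [one_div, mul_inv, ← div_eq_mul_inv, abs_of_pos h2]
      gcongr
      linarith [inv_nonneg.mpr h2.le]
    calc I2 c Cstar tstar t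
        ≤ t ^ (-(4*c)) * ((t ^ (2*c-2)/(4*Cstar^3)) * (t ^ (2*c-2)/(2*c-2))) := by
          refine le_trans hmain ?_
          rw [hM]
          exact mul_le_mul_of_nonneg_left
            (mul_le_mul_of_nonneg_left hJbd (by positivity))
            (Real.rpow_nonneg ht0.le _)
      _ = (1/((2*c-2)*(4*Cstar^3))) * (t ^ (-(4*c)) * t ^ (2*c-2) * t ^ (2*c-2)) := by
          field_simp
      _ = (1/((2*c-2)*(4*Cstar^3))) * (1/t^4) := by
          rw [← Real.rpow_add ht0, ← Real.rpow_add ht0,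
            show (-(4*c) + (2*c-2) + (2*c-2) : ℝ) = -4 by ring, ht4]
      _ ≤ ((1 + |2*c - 2|⁻¹)/(4*Cstar^3)) * (1/t^4) :=
          mul_le_mul_of_nonneg_right hK1 (by positivity)
      _ = (1 + |2*c - 2|⁻¹)/(4*Cstar^3) / t^4 := by ring
  · -- case c = 1
    intro hceq
    subst hceq
    have hlog : (0:ℝ) ≤ Real.log t := Real.log_nonneg ht1
    have hlogs : (0:ℝ) ≤ Real.log tstar := Real.log_nonneg htstar
    have hM : max 1 (t ^ (2*(1:ℝ)-2)) = 1 := by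
      rw [show (2*(1:ℝ)-2) = 0 by norm_num, Real.rpow_zero, max_self]
    have hJ : (∫ u in tstar..t, u ^ (2*(1:ℝ)-3)) = Real.log t - Real.log tstar := by
      rw [show (2*(1:ℝ)-3) = -1 by norm_num]
      rw [intervalIntegral.integral_congr (g := fun u : ℝ => u⁻¹)
        (fun u _ => Real.rpow_neg_one u)]
      rw [integral_inv (Set.notMem_uIcc_of_lt hts0 ht0),
        Real.log_div (ne_of_gt ht0) (ne_of_gt hts0)]
    rw [hM, hJ] at hmain
    have hJbd : Real.log t - Real.log tstar ≤ 1 + Real.log t := by linarith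
    have hexp : t ^ (-(4*(1:ℝ))) = 1/t^4 := by
      rw [show -(4*(1:ℝ)) = (-4:ℝ) by norm_num, ht4]
    calc I2 1 Cstar tstar t
        ≤ t ^ (-(4*(1:ℝ))) * ((1/(4*Cstar^3)) * (Real.log t - Real.log tstar)) := hmain
      _ ≤ t ^ (-(4*(1:ℝ))) * ((1/(4*Cstar^3)) * (1 + Real.log t)) := by
          apply mul_le_mul_of_nonneg_left _ (Real.rpow_nonneg ht0.le _)
          exact mul_le_mul_of_nonneg_left hJbd (by positivity)
      _ = (1 + |2*(1:ℝ) - 2|⁻¹)/(4*Cstar^3) * (1 + Real.log t) / t ^ 4 := by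
          rw [hexp, show |2*(1:ℝ) - 2|⁻¹ = 0 by norm_num]
          ring
  · -- case c < 1
    intro hlt
    have h2 : (2*c-2:ℝ) < 0 := by linarith
    have hM : max 1 (t ^ (2*c-2)) = 1 :=
      max_eq_left (Real.rpow_le_one_of_one_le_of_nonpos ht1 h2.le)
    have hJ : (∫ u in tstar..t, u ^ (2*c-3))
        = (t ^ (2*c-2) - tstar ^ (2*c-2)) / (2*c-2) := by
      rw [integral_rpow (Or.inr ⟨ne_of_lt (by linarith : (2*c-3:ℝ) < -1),
        Set.notMem_uIcc_of_lt hts0 ht0⟩),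
        show (2*c-3+1:ℝ) = 2*c-2 by ring]
    have hJbd : (∫ u in tstar..t, u ^ (2*c-3)) ≤ (2-2*c)⁻¹ := by
      rw [hJ, div_le_iff_of_neg h2]
      have h1 : tstar ^ (2*c-2) ≤ 1 :=
        Real.rpow_le_one_of_one_le_of_nonpos htstar h2.le
      have h2' : (0:ℝ) ≤ t ^ (2*c-2) := Real.rpow_nonneg ht0.le _
      have he : (2-2*c)⁻¹ * (2*c-2) = -1 := by
        rw [inv_mul_eq_div, div_eq_iff (by linarith : (2-2*c:ℝ) ≠ 0)]; ring
      rw [he]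
      linarith
    have habs : |2*c - 2| = 2-2*c := by rw [abs_of_neg h2]; ring
    have hKc : (1/(4*Cstar^3)) * (2-2*c)⁻¹ ≤ (1 + |2*c - 2|⁻¹)/(4*Cstar^3) := by
      rw [habs, show (1/(4*Cstar^3)) * (2-2*c)⁻¹ = (2-2*c)⁻¹ / (4*Cstar^3) by ring]
      gcongr
      linarith [inv_nonneg.mpr (by linarith : (0:ℝ) ≤ 2-2*c)]
    calc I2 c Cstar tstar t
        ≤ t ^ (-(4*c)) * ((1/(4*Cstar^3)) * (2-2*c)⁻¹) := by
          refine le_trans hmain ?_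
          rw [hM]
          exact mul_le_mul_of_nonneg_left
            (mul_le_mul_of_nonneg_left hJbd (by positivity))
            (Real.rpow_nonneg ht0.le _)
      _ ≤ t ^ (-(4*c)) * ((1 + |2*c - 2|⁻¹)/(4*Cstar^3)) :=
          mul_le_mul_of_nonneg_left hKc (Real.rpow_nonneg ht0.le _)
      _ = (1 + |2*c - 2|⁻¹)/(4*Cstar^3) / t ^ (4*c) := by
          rw [Real.rpow_neg ht0.le]; ring
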